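/- Let Λ > 0 and γ, σ, T > 0 with 1 − Λγσ²T > 0, and define k_t = (1 − c γσ²Λ(T−t))/(1 − γσ²Λ(T−t)) for a constant c with c = vεγ/σ_e, where v, ε, γ, σ_e > 0 and Λ = σ_e/v − εγ > 0. If v satisfies the defining equation (σ_e/v − εγ)²/(1 − γσ²T(σ_e/v − εγ)) − (2ε/(σ²T)) log(1 − γσ²T(σ_e/v − εγ)) = σ_Ξ²/(σ²T) + ε²γ² σ_β²/(σ²T) with σ_e² = σ_Ξ² + ε²γ²(σ²T + σ_β²), then (1/T)∫₀ᵀ k_t² dt = v²/(σ²T). -/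

import Mathlib

theorem stmt_3 (σ T σΞ σβ γ ε v σe : ℝ)
    (hσ : 0 < σ) (hT : 0 < T) (hσΞ : 0 < σΞ) (hσβ : 0 < σβ)
    (hγ : 0 < γ) (hε : 0 < ε) (hv : 0 < v)
    (hσe : σe = Real.sqrt (σΞ^2 + ε^2 * γ^2 * (σ^2 * T + σβ^2)))
    (Λ : ℝ) (hΛdef : Λ = σe / v - ε * γ) (hΛ : 0 < Λ)
    (hΛT : Λ * γ * σ^2 * T < 1)
    (c : ℝ) (hc : c = v * ε * γ / σe)
    (k : ℝ → ℝ)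
    (hk : ∀ t, k t = (1 - c * γ * σ^2 * Λ * (T - t)) / (1 - γ * σ^2 * Λ * (T - t)))
    (hroot : (σe / v - ε * γ)^2 / (1 - γ * σ^2 * T * (σe / v - ε * γ))
      - (2 * ε / (σ^2 * T)) * Real.log (1 - γ * σ^2 * T * (σe / v - ε * γ))
      = σΞ^2 / (σ^2 * T) + ε^2 * γ^2 * σβ^2 / (σ^2 * T)) :
    (1 / T) * ∫ t in (0:ℝ)..T, (k t)^2 = v^2 / (σ^2 * T) := by
  have hσe_pos : 0 < σe := by
    rw [hσe]; apply Real.sqrt_pos.2; positivity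
  have hσe2 : σe^2 = σΞ^2 + ε^2 * γ^2 * (σ^2 * T + σβ^2) := by
    rw [hσe, Real.sq_sqrt (by positivity)]
  rw [← hΛdef] at hroot
  have hA : 0 < γ * σ^2 * Λ := by positivity
  have hD : 0 < 1 - γ * σ^2 * Λ * T := by nlinarith [hΛT]
  have hpos : ∀ t ∈ Set.uIcc (0:ℝ) T, 0 < 1 - γ * σ^2 * Λ * (T - t) := by
    intro t ht
    rw [Set.uIcc_of_le hT.le] at ht
    have h1 : γ * σ^2 * Λ * (T - t) ≤ γ * σ^2 * Λ * T := by
      apply mul_le_mul_of_nonneg_left (by linarith [ht.1]) hA.le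
    linarith
  -- antiderivative
  set F : ℝ → ℝ := fun t => c^2*t + (2*c*(1-c)/(γ*σ^2*Λ))*Real.log (1 - γ*σ^2*Λ*(T-t))
      - ((1-c)^2/(γ*σ^2*Λ))*(1 - γ*σ^2*Λ*(T-t))⁻¹ with hF
  have hderiv : ∀ t ∈ Set.uIcc (0:ℝ) T, HasDerivAt F ((k t)^2) t := by
    intro t ht
    have hgt := hpos t ht
    have hg : HasDerivAt (fun s => 1 - γ*σ^2*Λ*(T-s)) (γ*σ^2*Λ) t := by
      have h0 : HasDerivAt (fun s : ℝ => T - s) (0 - 1) t :=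
        (hasDerivAt_const t T).sub (hasDerivAt_id t)
      have := ((h0.const_mul (γ*σ^2*Λ)).const_sub 1)
      simpa using this
    have hlog : HasDerivAt (fun s => Real.log (1 - γ*σ^2*Λ*(T-s)))
        ((γ*σ^2*Λ) / (1 - γ*σ^2*Λ*(T-t))) t := hg.log hgt.ne'
    have hinv : HasDerivAt (fun s => (1 - γ*σ^2*Λ*(T-s))⁻¹)
        (-(γ*σ^2*Λ) / (1 - γ*σ^2*Λ*(T-t))^2) t := by
      exact hg.inv hgt.ne'
    have hsum : HasDerivAt F
        (c^2 + (2*c*(1-c)/(γ*σ^2*Λ)) * ((γ*σ^2*Λ) / (1 - γ*σ^2*Λ*(T-t)))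
          - ((1-c)^2/(γ*σ^2*Λ)) * (-(γ*σ^2*Λ) / (1 - γ*σ^2*Λ*(T-t))^2)) t := by
      have h1 : HasDerivAt (fun s : ℝ => c^2*s) (c^2) t := by
        simpa using (hasDerivAt_id t).const_mul (c^2)
      exact (h1.add (hlog.const_mul _)).sub (hinv.const_mul _)
    convert hsum using 1
    rw [hk t]
    field_simp
    ring
  have hint : IntervalIntegrable (fun t => (k t)^2) MeasureTheory.volume 0 T := by
    apply ContinuousOn.intervalIntegrable
    have : ∀ t ∈ Set.uIcc (0:ℝ) T, (k t)^2 =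
        ((1 - c * γ * σ^2 * Λ * (T - t)) / (1 - γ * σ^2 * Λ * (T - t)))^2 := by
      intro t _; rw [hk t]
    apply ContinuousOn.congr _ this
    apply ContinuousOn.pow
    apply ContinuousOn.div (by fun_prop) (by fun_prop)
    intro x hx
    exact (hpos x hx).ne'
  have hInt := intervalIntegral.integral_eq_sub_of_hasDerivAt hderiv hint
  rw [hInt]
  -- now pure algebra
  set L := Real.log (1 - γ * σ^2 * Λ * T) with hL
  have hFT : F T = c^2*T - ((1-c)^2/(γ*σ^2*Λ)) := by
    rw [hF]; simp
  have hF0 : F 0 = (2*c*(1-c)/(γ*σ^2*Λ))*L - ((1-c)^2/(γ*σ^2*Λ))*(1 - γ*σ^2*Λ*T)⁻¹ := by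
    rw [hF]; simp [hL]
  rw [hFT, hF0]
  -- key identity from hroot
  have hlogeq : (1 - γ * σ^2 * T * Λ) = (1 - γ * σ^2 * Λ * T) := by ring
  rw [hlogeq] at hroot
  have hσeneg : σe ≠ 0 := hσe_pos.ne'
  have hσev : σe = v*Λ + v*ε*γ := by
    have h := hΛdef
    field_simp at h
    linear_combination -h
  have h3 : Λ^2*σ^2*T - (1 - γ*σ^2*Λ*T)*(2*ε*L) = (σΞ^2 + ε^2*γ^2*σβ^2)*(1 - γ*σ^2*Λ*T) := by
    apply mul_right_cancel₀ (show (σ^2*T:ℝ) ≠ 0 by positivity)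
    have hD2 : (1 - Λ * γ * σ ^ 2 * T) ≠ 0 := by linarith
    field_simp at hroot
    rw [show (1 - Λ * γ * σ ^ 2 * T) = 1 - γ * σ ^ 2 * Λ * T by ring, ← hL] at hroot
    linear_combination (σ^2*T) * hroot
  have keyp : Λ^2*σ^2*T - 2*ε*L*(1 - γ*σ^2*Λ*T) + ε^2*γ^2*σ^2*T*(1 - γ*σ^2*Λ*T)
      = σe^2*(1 - γ*σ^2*Λ*T) := by
    linear_combination h3 - (1 - γ*σ^2*Λ*T)*hσe2
  have hc2' : 1 - c = v*Λ/σe := by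
    rw [hc]; field_simp; linear_combination hσev
  rw [hc2', hc]

  have hD3 : (1 - T * γ * Λ * σ ^ 2) ≠ 0 := by nlinarith
  field_simp
  linear_combination γ*keyp
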